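/- arXiv:1412.0515 — 13 statements merged into one kernel-verified Lean document; each statement's English description precedes it below -/
import Mathlib

section
/- Let k, k', k'' be nonnegative integers with k' ≥ 1. Let G be a finite simple graph of order n and size m with minimum degree δ(G) ≥ k, and suppose G has at least one vertex of degree at least k'+k''. Let δ* = min{deg(v) : v ∈ V(G), deg(v) ≥ k'+k''}. Then γ_{(k,k',k'')}(G) ≥ ((k' + δ*)·n − 2m)/(δ* + k' − k). -/
open Finset

lemma cross_sum' {V : Type*} [Fintype V] [DecidableEq V] (G : SimpleGraph V)
    [DecidableRel G.Adj] (S : Finset V) :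
    ∑ v ∈ S, (G.neighborFinset v \ S).card = ∑ v ∈ Sᶜ, (G.neighborFinset v ∩ S).card := by
  have h1 : ∀ v, (G.neighborFinset v \ S) = Sᶜ.filter (fun u => G.Adj v u) := by
    intro v; ext u
    simp [SimpleGraph.mem_neighborFinset, and_comm]
  have h2 : ∀ v, (G.neighborFinset v ∩ S) = S.filter (fun u => G.Adj v u) := by
    intro v; ext u
    simp [SimpleGraph.mem_neighborFinset, and_comm]
  calc ∑ v ∈ S, (G.neighborFinset v \ S).card
      = ∑ v ∈ S, ∑ u ∈ Sᶜ, (if G.Adj v u then 1 else 0) := by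
        simp_rw [h1, Finset.card_filter]
    _ = ∑ u ∈ Sᶜ, ∑ v ∈ S, (if G.Adj v u then 1 else 0) := Finset.sum_comm
    _ = ∑ v ∈ Sᶜ, (G.neighborFinset v ∩ S).card := by
        simp_rw [h2, Finset.card_filter]
        apply Finset.sum_congr rfl
        intro u _
        apply Finset.sum_congr rfl
        intro v _
        simp [SimpleGraph.adj_comm]

def SimpleGraph.IsKkkDomSet {V : Type*} [Fintype V] [DecidableEq V] (G : SimpleGraph V)
    [DecidableRel G.Adj] (k k' k'' : ℕ) (S : Finset V) : Prop :=
  (∀ v ∈ S, k ≤ (G.neighborFinset v ∩ S).card) ∧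
  (∀ v ∉ S, k' ≤ (G.neighborFinset v ∩ S).card ∧ k'' ≤ (G.neighborFinset v \ S).card)

noncomputable def SimpleGraph.kkkDomNum {V : Type*} [Fintype V] [DecidableEq V]
    (G : SimpleGraph V) [DecidableRel G.Adj] (k k' k'' : ℕ) : ℕ :=
  sInf {n | ∃ S : Finset V, G.IsKkkDomSet k k' k'' S ∧ S.card = n}

/-- Let k, k', k'' be nonnegative integers with k' ≥ 1, G a finite simple graph of order n
and size m with δ(G) ≥ k, having at least one vertex of degree at least k'+k''.  With
δ* = min{deg v : deg v ≥ k'+k''}, we have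
γ_{(k,k',k'')}(G) ≥ ((k' + δ*)·n − 2m)/(δ* + k' − k). -/
theorem stmt_0 {V : Type*} [Fintype V] [DecidableEq V] (G : SimpleGraph V)
    [DecidableRel G.Adj] (k k' k'' : ℕ) (hk' : 1 ≤ k')
    (hδ : ∀ v : V, k ≤ G.degree v)
    (hex : ∃ v : V, k' + k'' ≤ G.degree v)
    (δstar : ℕ) (hδstar : δstar = sInf {d : ℕ | ∃ v : V, G.degree v = d ∧ k' + k'' ≤ d}) :
    (((k' : ℝ) + δstar) * Fintype.card V - 2 * G.edgeFinset.card) / ((δstar : ℝ) + k' - k)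
      ≤ G.kkkDomNum k k' k'' := by
  -- δstar is attained and at least k, at least k'+k''
  obtain ⟨w, hw⟩ := hex
  have hδmem : δstar ∈ {d : ℕ | ∃ v : V, G.degree v = d ∧ k' + k'' ≤ d} := by
    rw [hδstar]; exact Nat.sInf_mem ⟨G.degree w, w, rfl, hw⟩
  obtain ⟨w0, hw0, hw0'⟩ := hδmem
  have hkδ : k ≤ δstar := hw0 ▸ hδ w0
  have hδle : ∀ v : V, k' + k'' ≤ G.degree v → δstar ≤ G.degree v := by
    intro v hv; rw [hδstar]; exact Nat.sInf_le ⟨v, rfl, hv⟩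
  -- the domination number is attained by some set S
  have hne : (G.kkkDomNum k k' k'') ∈
      {n | ∃ S : Finset V, G.IsKkkDomSet k k' k'' S ∧ S.card = n} := by
    apply Nat.sInf_mem
    refine ⟨(Finset.univ : Finset V).card, Finset.univ, ⟨?_, ?_⟩, rfl⟩
    · intro v _
      have : G.neighborFinset v ∩ Finset.univ = G.neighborFinset v := by simp
      rw [this]; exact hδ v
    · intro v hv; simp at hv
  obtain ⟨S, hS, hScard⟩ := hne
  set γ := G.kkkDomNum k k' k'' with hγ
  set n := Fintype.card V
  set m := G.edgeFinset.card
  -- key nat inequality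
  have hsum : ∑ v : V, G.degree v = 2 * m := G.sum_degrees_eq_twice_card_edges
  have hsplit : ∑ v ∈ S, G.degree v + ∑ v ∈ Sᶜ, G.degree v = 2 * m := by
    rw [Finset.sum_add_sum_compl]; exact hsum
  have hdegS : ∀ v ∈ S, k + (G.neighborFinset v \ S).card ≤ G.degree v := by
    intro v hv
    have : (G.neighborFinset v ∩ S).card + (G.neighborFinset v \ S).card
        = (G.neighborFinset v).card := Finset.card_inter_add_card_sdiff _ _
    have hdeg : G.degree v = (G.neighborFinset v).card := rfl
    have := hS.1 v hv
    omega
  have hA : k * S.card + ∑ v ∈ S, (G.neighborFinset v \ S).card ≤ ∑ v ∈ S, G.degree v := by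
    calc k * S.card + ∑ v ∈ S, (G.neighborFinset v \ S).card
        = ∑ v ∈ S, (k + (G.neighborFinset v \ S).card) := by
          rw [Finset.sum_add_distrib, Finset.sum_const, smul_eq_mul, mul_comm]
      _ ≤ ∑ v ∈ S, G.degree v := Finset.sum_le_sum hdegS
  have hB : k' * Sᶜ.card ≤ ∑ v ∈ S, (G.neighborFinset v \ S).card := by
    rw [cross_sum']
    calc k' * Sᶜ.card = ∑ _v ∈ Sᶜ, k' := by rw [Finset.sum_const, smul_eq_mul, mul_comm]
      _ ≤ _ := Finset.sum_le_sum (fun v hv => (hS.2 v (Finset.mem_compl.mp hv)).1)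
  have hC : δstar * Sᶜ.card ≤ ∑ v ∈ Sᶜ, G.degree v := by
    calc δstar * Sᶜ.card = ∑ _v ∈ Sᶜ, δstar := by rw [Finset.sum_const, smul_eq_mul, mul_comm]
      _ ≤ _ := by
        apply Finset.sum_le_sum
        intro v hv
        have hv' := hS.2 v (Finset.mem_compl.mp hv)
        apply hδle
        have : (G.neighborFinset v ∩ S).card + (G.neighborFinset v \ S).card
            = (G.neighborFinset v).card := Finset.card_inter_add_card_sdiff _ _
        have hdeg : G.degree v = (G.neighborFinset v).card := rfl
        omega
  have hcompl : Sᶜ.card = n - S.card := by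
    simp [Finset.card_compl, n]
  have hle : S.card ≤ n := Finset.card_le_univ S
  have hkey : (k' + δstar) * n + k * γ ≤ 2 * m + γ * (δstar + k') := by
    have h1 : k * S.card + k' * Sᶜ.card + δstar * Sᶜ.card ≤ 2 * m := by
      have := le_trans (Nat.add_le_add_left hB (k * S.card)) hA
      omega
    rw [← hScard]
    have : (k' + δstar) * n = (k' + δstar) * (n - S.card) + (k' + δstar) * S.card := by
      rw [← Nat.mul_add]; congr 1; omega
    rw [hcompl] at h1
    nlinarith [Nat.sub_add_cancel hle]
  -- pass to ℝ
  have hden : (0:ℝ) < (δstar : ℝ) + k' - k := by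
    have : (k:ℝ) ≤ δstar := by exact_mod_cast hkδ
    have : (1:ℝ) ≤ k' := by exact_mod_cast hk'
    linarith
  rw [div_le_iff₀ hden]
  have hkeyR : ((k':ℝ) + δstar) * n + k * γ ≤ 2 * m + γ * (δstar + k') := by
    exact_mod_cast hkey
  ring_nf
  ring_nf at hkeyR
  linarith
end

section
/- If G is a cubic graph (every vertex has degree 3) of order n, then the restrained double domination number satisfies γ_{2r}(G) ≥ n/2. -/
open Finset

lemma aux_bound {V : Type*} [Fintype V] [DecidableEq V] (G : SimpleGraph V)
    [DecidableRel G.Adj] (hcubic : ∀ v : V, G.degree v = 3)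
    (S : Finset V) (hS : G.IsKkkDomSet 1 2 1 S) :
    Fintype.card V ≤ 2 * S.card := by
  obtain ⟨h1, h2⟩ := hS
  have e1 : ∀ (B : Finset V) (v : V), (G.neighborFinset v ∩ B).card
      = ∑ u ∈ B, if G.Adj v u then 1 else 0 := by
    intro B v
    rw [← Finset.card_filter]
    congr 1
    ext u
    simp [SimpleGraph.mem_neighborFinset, and_comm]
  have key : ∑ v ∈ Sᶜ, (G.neighborFinset v ∩ S).card
      = ∑ v ∈ S, (G.neighborFinset v ∩ Sᶜ).card := by
    calc ∑ v ∈ Sᶜ, (G.neighborFinset v ∩ S).card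
        = ∑ v ∈ Sᶜ, ∑ u ∈ S, if G.Adj v u then 1 else 0 :=
          Finset.sum_congr rfl fun v _ => e1 S v
      _ = ∑ u ∈ S, ∑ v ∈ Sᶜ, if G.Adj v u then 1 else 0 := Finset.sum_comm
      _ = ∑ u ∈ S, ∑ v ∈ Sᶜ, if G.Adj u v then 1 else 0 := by
          refine Finset.sum_congr rfl fun u _ => Finset.sum_congr rfl fun v _ => ?_
          simp [G.adj_comm]
      _ = ∑ v ∈ S, (G.neighborFinset v ∩ Sᶜ).card :=
          (Finset.sum_congr rfl fun u _ => (e1 Sᶜ u)).symm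
  have lb : 2 * Sᶜ.card ≤ ∑ v ∈ Sᶜ, (G.neighborFinset v ∩ S).card := by
    calc 2 * Sᶜ.card = ∑ _v ∈ Sᶜ, 2 := by rw [Finset.sum_const, smul_eq_mul, mul_comm]
      _ ≤ ∑ v ∈ Sᶜ, (G.neighborFinset v ∩ S).card :=
          Finset.sum_le_sum fun v hv => (h2 v (Finset.mem_compl.mp hv)).1
  have ub : ∑ v ∈ S, (G.neighborFinset v ∩ Sᶜ).card ≤ 2 * S.card := by
    calc ∑ v ∈ S, (G.neighborFinset v ∩ Sᶜ).card ≤ ∑ _v ∈ S, 2 := by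
          refine Finset.sum_le_sum fun v hv => ?_
          have hdeg : (G.neighborFinset v ∩ S).card + (G.neighborFinset v \ S).card
              = G.degree v := Finset.card_inter_add_card_sdiff _ _
          have h1v := h1 v hv
          have : G.neighborFinset v ∩ Sᶜ = G.neighborFinset v \ S := by
            ext u; simp
          rw [this]
          rw [hcubic v] at hdeg
          omega
      _ = 2 * S.card := by rw [Finset.sum_const, smul_eq_mul, mul_comm]
  have hcc : Sᶜ.card ≤ S.card := by omega
  have := Finset.card_add_card_compl S
  omega

/-- If G is a cubic graph of order n, then γ_{2r}(G) = γ_{(1,2,1)}(G) ≥ n/2. -/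
theorem stmt_3 {V : Type*} [Fintype V] [DecidableEq V] (G : SimpleGraph V)
    [DecidableRel G.Adj] (hcubic : ∀ v : V, G.degree v = 3) :
    (Fintype.card V : ℝ) / 2 ≤ G.kkkDomNum 1 2 1 := by
  have hne : {n | ∃ S : Finset V, G.IsKkkDomSet 1 2 1 S ∧ S.card = n}.Nonempty := by
    refine ⟨(Finset.univ : Finset V).card, Finset.univ, ⟨?_, ?_⟩, rfl⟩
    · intro v _
      have : G.neighborFinset v ∩ Finset.univ = G.neighborFinset v := Finset.inter_univ _
      rw [this]
      have := hcubic v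
      rw [← SimpleGraph.card_neighborFinset_eq_degree] at this
      omega
    · intro v hv
      exact absurd (Finset.mem_univ v) hv
  obtain ⟨S, hS, hcard⟩ := Nat.sInf_mem hne
  have hb := aux_bound G hcubic S hS
  rw [hcard] at hb
  have hb' : Fintype.card V ≤ 2 * G.kkkDomNum 1 2 1 := by
    rw [SimpleGraph.kkkDomNum]; exact hb
  have hR := (Nat.cast_le (α := ℝ)).mpr hb'
  push_cast at hR
  linarith
end

section
/- Let k be a nonnegative integer and k' a positive integer. If G is a finite simple graph of order n with minimum degree δ(G) ≥ k and maximum degree Δ, then γ_{(k,k',0)}(G) ≥ k'·n/(Δ + k' − k). -/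
open Finset

lemma aux_inter_card {V : Type*} [Fintype V] [DecidableEq V] (G : SimpleGraph V)
    [DecidableRel G.Adj] (S : Finset V) (v : V) :
    (G.neighborFinset v ∩ S).card = ∑ u ∈ S, if G.Adj v u then 1 else 0 := by
  rw [Finset.inter_comm, ← Finset.filter_mem_eq_inter, Finset.card_eq_sum_ones,
    Finset.sum_filter]
  simp [SimpleGraph.mem_neighborFinset]

lemma aux_sdiff_card {V : Type*} [Fintype V] [DecidableEq V] (G : SimpleGraph V)
    [DecidableRel G.Adj] (S : Finset V) (v : V) :
    (G.neighborFinset v \ S).card = ∑ u ∈ Sᶜ, if G.Adj v u then 1 else 0 := by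
  rw [Finset.sdiff_eq_inter_compl, Finset.inter_comm, ← Finset.filter_mem_eq_inter,
    Finset.card_eq_sum_ones, Finset.sum_filter]
  simp [SimpleGraph.mem_neighborFinset]

/-- If δ(G) ≥ k and k' ≥ 1, then γ_{(k,k',0)}(G) ≥ k'·n/(Δ + k' − k). -/
theorem stmt_4 {V : Type*} [Fintype V] [DecidableEq V] (G : SimpleGraph V)
    [DecidableRel G.Adj] (k k' : ℕ) (hk' : 1 ≤ k')
    (hδ : ∀ v : V, k ≤ G.degree v) :
    (k' : ℝ) * Fintype.card V / ((G.maxDegree : ℝ) + k' - k) ≤ G.kkkDomNum k k' 0 := by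
  rcases isEmpty_or_nonempty V with hV | hV
  · have h0 : Fintype.card V = 0 := Fintype.card_eq_zero
    rw [h0, Nat.cast_zero, mul_zero, zero_div]
    exact Nat.cast_nonneg _
  -- the defining set is nonempty (take S = univ)
  have hne : {n | ∃ S : Finset V, G.IsKkkDomSet k k' 0 S ∧ S.card = n}.Nonempty := by
    refine ⟨(Finset.univ : Finset V).card, Finset.univ, ⟨?_, ?_⟩, rfl⟩
    · intro v _
      rw [Finset.inter_univ]
      exact hδ v
    · intro v hv; exact absurd (Finset.mem_univ v) hv
  obtain ⟨S, hS, hScard⟩ := Nat.sInf_mem hne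
  set γ := G.kkkDomNum k k' 0
  -- Δ ≥ k
  have hΔk : k ≤ G.maxDegree := le_trans (hδ Classical.ofNonempty)
    (G.degree_le_maxDegree _)
  -- double counting
  have hdc : ∑ v ∈ Sᶜ, (G.neighborFinset v ∩ S).card
      = ∑ u ∈ S, (G.neighborFinset u \ S).card := by
    simp_rw [aux_inter_card, aux_sdiff_card]
    rw [Finset.sum_comm]
    apply Finset.sum_congr rfl
    intro u _
    apply Finset.sum_congr rfl
    intro v _
    simp [G.adj_comm u v]
  have hlow : Sᶜ.card * k' ≤ ∑ v ∈ Sᶜ, (G.neighborFinset v ∩ S).card := by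
    have := Finset.card_nsmul_le_sum Sᶜ (fun v => (G.neighborFinset v ∩ S).card) k'
      (fun v hv => (hS.2 v (by simpa using hv)).1)
    simpa [smul_eq_mul] using this
  have hup : ∑ u ∈ S, (G.neighborFinset u \ S).card ≤ S.card * (G.maxDegree - k) := by
    rw [Finset.card_eq_sum_ones S, Finset.sum_mul, one_mul]
    apply Finset.sum_le_sum
    intro u hu
    have h1 := Finset.card_inter_add_card_sdiff (G.neighborFinset u) S
    have h2 : (G.neighborFinset u).card ≤ G.maxDegree := G.degree_le_maxDegree u
    have h3 := hS.1 u hu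
    omega
  have hnat : k' * Sᶜ.card ≤ S.card * (G.maxDegree - k) := by
    rw [mul_comm]; exact le_trans hlow (hdc ▸ hup)
  -- move to ℝ
  have hsle : S.card ≤ Fintype.card V := Finset.card_le_univ S
  have hcompl : Sᶜ.card = Fintype.card V - S.card := by
    rw [Finset.card_compl]
  have hden : (0:ℝ) < (G.maxDegree : ℝ) + k' - k := by
    have : (k:ℝ) ≤ G.maxDegree := by exact_mod_cast hΔk
    have : (1:ℝ) ≤ k' := by exact_mod_cast hk'
    linarith
  rw [div_le_iff₀ hden]
  have hR : (k' : ℝ) * ((Fintype.card V : ℝ) - S.card)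
      ≤ S.card * ((G.maxDegree : ℝ) - k) := by
    have := hnat
    rw [hcompl] at this
    have hcast : ((k' * (Fintype.card V - S.card) : ℕ) : ℝ)
        ≤ ((S.card * (G.maxDegree - k) : ℕ) : ℝ) := by exact_mod_cast this
    rwa [Nat.cast_mul, Nat.cast_mul, Nat.cast_sub hsle, Nat.cast_sub hΔk] at hcast
  have hγ : (γ : ℝ) = S.card := by exact_mod_cast hScard.symm
  rw [hγ]
  nlinarith [hR]
end

section
/- Let k be a positive integer. If G is a finite simple graph of order n with maximum degree Δ, then the k-domination number satisfies γ_k(G) ≥ k·n/(Δ + k). -/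
open Finset

/-- If k ≥ 1, then γ_k(G) = γ_{(0,k,0)}(G) ≥ k·n/(Δ + k). -/
theorem stmt_7 {V : Type*} [Fintype V] [DecidableEq V] (G : SimpleGraph V)
    [DecidableRel G.Adj] (k : ℕ) (hk : 1 ≤ k) :
    (k : ℝ) * Fintype.card V / ((G.maxDegree : ℝ) + k) ≤ G.kkkDomNum 0 k 0 := by
  classical
  set n := Fintype.card V
  set Δ := G.maxDegree
  -- key counting lemma
  have key : ∀ S : Finset V, G.IsKkkDomSet 0 k 0 S → k * n ≤ (Δ + k) * S.card := by
    intro S hS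
    have h1 : k * (univ \ S).card ≤ ∑ v ∈ univ \ S, (G.neighborFinset v ∩ S).card := by
      rw [mul_comm]
      exact Finset.card_nsmul_le_sum _ _ _ (fun v hv => (hS.2 v (by simpa using hv)).1)
    have hswap : ∑ v ∈ univ \ S, (G.neighborFinset v ∩ S).card
        = ∑ s ∈ S, (G.neighborFinset s ∩ (univ \ S)).card := by
      have hcard : ∀ (T U : Finset V) (v : V), (G.neighborFinset v ∩ T).card
          = ∑ s ∈ T, if G.Adj v s then 1 else 0 := by
        intro T U v
        rw [show G.neighborFinset v ∩ T = T.filter (G.Adj v) from by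
          ext s; simp [and_comm], Finset.card_filter]
      simp only [hcard S S, hcard (univ \ S) (univ \ S)]
      rw [Finset.sum_comm]
      apply Finset.sum_congr rfl
      intro s _
      apply Finset.sum_congr rfl
      intro v _
      simp [G.adj_comm]
    have h2 : ∑ s ∈ S, (G.neighborFinset s ∩ (univ \ S)).card ≤ Δ * S.card := by
      rw [mul_comm]
      calc ∑ s ∈ S, (G.neighborFinset s ∩ (univ \ S)).card
          ≤ ∑ s ∈ S, Δ := by
            apply Finset.sum_le_sum
            intro s _
            calc (G.neighborFinset s ∩ (univ \ S)).card ≤ (G.neighborFinset s).card :=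
                  Finset.card_le_card (Finset.inter_subset_left)
              _ = G.degree s := G.card_neighborFinset_eq_degree s
              _ ≤ Δ := G.degree_le_maxDegree s
        _ = S.card * Δ := by rw [Finset.sum_const, smul_eq_mul]
    have hcards : (univ \ S).card = n - S.card := by
      rw [Finset.card_sdiff_of_subset (Finset.subset_univ S), Finset.card_univ]
    have hle : S.card ≤ n := by simpa [n, Finset.card_univ] using Finset.card_le_card (Finset.subset_univ S)
    have hmain : k * (n - S.card) ≤ Δ * S.card := by
      rw [← hcards]; exact le_trans h1 (hswap ▸ h2)
    calc k * n = k * (n - S.card) + k * S.card := by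
          rw [← Nat.mul_add, Nat.sub_add_cancel hle]
      _ ≤ Δ * S.card + k * S.card := by exact Nat.add_le_add_right hmain _
      _ = (Δ + k) * S.card := by ring
  -- the set is nonempty (univ works)
  have hne : {m | ∃ S : Finset V, G.IsKkkDomSet 0 k 0 S ∧ S.card = m}.Nonempty := by
    refine ⟨(univ : Finset V).card, univ, ⟨fun v _ => Nat.zero_le _, fun v hv => absurd (Finset.mem_univ v) hv⟩, rfl⟩
  obtain ⟨S, hS, hcard⟩ := Nat.sInf_mem hne
  have hnat : k * n ≤ (Δ + k) * G.kkkDomNum 0 k 0 := by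
    rw [SimpleGraph.kkkDomNum, ← hcard]; exact key S hS
  have hpos : (0 : ℝ) < (Δ : ℝ) + k := by
    have : (1 : ℝ) ≤ (k : ℝ) := by exact_mod_cast hk
    positivity
  rw [div_le_iff₀ hpos]
  calc (k : ℝ) * n ≤ ((Δ + k) * G.kkkDomNum 0 k 0 : ℕ) := by exact_mod_cast hnat
    _ = (G.kkkDomNum 0 k 0 : ℝ) * ((Δ : ℝ) + k) := by push_cast; ring
end

section
/- Let k and k' be positive integers with k' ≥ k + 1, and let G be a finite simple graph of order n with minimum degree δ = δ(G) ≥ k' + 1. Then γ_{(k,k',1)}(G) ≤ n − δ + k' − 1. -/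
open Finset

/-- If k, k' ≥ 1 with k' ≥ k + 1 and δ(G) ≥ k' + 1, then
γ_{(k,k',1)}(G) ≤ n − δ + k' − 1. -/
theorem stmt_8 {V : Type*} [Fintype V] [DecidableEq V] (G : SimpleGraph V)
    [DecidableRel G.Adj] (k k' : ℕ) (hk : 1 ≤ k) (hkk' : k + 1 ≤ k')
    (hδ : k' + 1 ≤ G.minDegree) :
    G.kkkDomNum k k' 1 ≤ Fintype.card V - G.minDegree + k' - 1 := by
  classical
  set δ := G.minDegree with hδdef
  have hV : Nonempty V := by
    by_contra h
    rw [not_nonempty_iff] at h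
    have : δ = 0 := by
      simp [hδdef, SimpleGraph.minDegree, Finset.univ_eq_empty]
    omega
  obtain ⟨v⟩ := hV
  have hdegv : δ ≤ G.degree v := G.minDegree_le_degree v
  have hcardN : (G.neighborFinset v).card = G.degree v := G.card_neighborFinset_eq_degree v
  obtain ⟨A, hAsub, hAcard⟩ := Finset.exists_subset_card_eq (s := G.neighborFinset v) (n := δ - k')
    (by omega)
  have hvA : v ∉ A := fun hv => G.notMem_neighborFinset_self v (hAsub hv)
  set T : Finset V := insert v A with hT
  have hTcard : T.card = δ - k' + 1 := by
    rw [hT, Finset.card_insert_of_notMem hvA, hAcard]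
  set S : Finset V := Finset.univ \ T with hS
  have hmemS : ∀ w : V, w ∈ S ↔ w ∉ T := by
    intro w; simp [hS]
  have hinter : ∀ w : V, G.neighborFinset w ∩ S = G.neighborFinset w \ T := by
    intro w; ext x; simp [hS, and_comm]
  have hdegw : ∀ w : V, δ ≤ (G.neighborFinset w).card := by
    intro w
    rw [G.card_neighborFinset_eq_degree w]
    exact G.minDegree_le_degree w
  have hdom : G.IsKkkDomSet k k' 1 S := by
    constructor
    · intro w _
      rw [hinter]
      have h1 := Finset.card_le_card_sdiff_add_card (s := G.neighborFinset w) (t := T)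
      have := hdegw w
      omega
    · intro u hu
      rw [hmemS, not_not] at hu
      have hinterT : (G.neighborFinset u ∩ T).card ≤ δ - k' := by
        have hsub : G.neighborFinset u ∩ T ⊆ T.erase u := by
          intro x hx
          rw [Finset.mem_inter] at hx
          rw [Finset.mem_erase]
          refine ⟨fun hxu => ?_, hx.2⟩
          exact G.notMem_neighborFinset_self u (hxu ▸ hx.1)
        have := Finset.card_le_card hsub
        rw [Finset.card_erase_of_mem hu] at this
        omega
      have hsplit : (G.neighborFinset u ∩ T).card + (G.neighborFinset u \ T).card
          = (G.neighborFinset u).card := Finset.card_inter_add_card_sdiff _ _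
      constructor
      · rw [hinter]
        have := hdegw u
        omega
      · have hsdiff : G.neighborFinset u \ S = G.neighborFinset u ∩ T := by
          ext x; simp [hS]
        rw [hsdiff]
        rcases Finset.mem_insert.mp hu with rfl | huA
        · -- u = v : A ⊆ neighbors ∩ T, |A| = δ - k' ≥ 1
          have hsub : A ⊆ G.neighborFinset u ∩ T := by
            intro x hx
            exact Finset.mem_inter.mpr ⟨hAsub hx, Finset.mem_insert_of_mem hx⟩
          have := Finset.card_le_card hsub
          omega
        · -- u ∈ A : v is a neighbor of u in T
          have hvmem : v ∈ G.neighborFinset u ∩ T := by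
            refine Finset.mem_inter.mpr ⟨?_, Finset.mem_insert_self _ _⟩
            rw [SimpleGraph.mem_neighborFinset]
            exact (G.mem_neighborFinset v u).mp (hAsub huA) |>.symm
          have := Finset.card_pos.mpr ⟨v, hvmem⟩
          omega
  have hScard : S.card = Fintype.card V - δ + k' - 1 := by
    have hn : δ + 1 ≤ Fintype.card V := by
      have := hdegw v
      have := Finset.card_le_card (Finset.subset_univ (insert v (G.neighborFinset v)))
      rw [Finset.card_insert_of_notMem (G.notMem_neighborFinset_self v),
        Finset.card_univ] at this
      omega
    rw [hS, Finset.card_sdiff_of_subset (Finset.subset_univ T), Finset.card_univ, hTcard]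
    omega
  calc G.kkkDomNum k k' 1 ≤ S.card := Nat.sInf_le ⟨S, hdom, rfl⟩
    _ = _ := hScard
end

section
/- Let k and k' be positive integers with k ≥ k', and let G be a finite simple graph of order n with minimum degree δ = δ(G) ≥ k + 2. Then γ_{(k,k',1)}(G) ≤ n − δ + k. -/
open Finset

/-- If k, k' ≥ 1 with k ≥ k' and δ(G) ≥ k + 2, then γ_{(k,k',1)}(G) ≤ n − δ + k. -/
theorem stmt_9 {V : Type*} [Fintype V] [DecidableEq V] (G : SimpleGraph V)
    [DecidableRel G.Adj] (k k' : ℕ) (hk' : 1 ≤ k') (hkk' : k' ≤ k)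
    (hδ : k + 2 ≤ G.minDegree) :
    G.kkkDomNum k k' 1 ≤ Fintype.card V - G.minDegree + k := by
  classical
  set δ := G.minDegree with hδdef
  -- V is nonempty
  have hne : Nonempty V := by
    by_contra h
    rw [not_nonempty_iff] at h
    have : δ = 0 := by
      simp [hδdef, SimpleGraph.minDegree, Finset.univ_eq_empty]
    omega
  obtain ⟨u⟩ := hne
  have hud : δ ≤ G.degree u := G.minDegree_le_degree u
  have hdeg : ∀ v : V, δ ≤ G.degree v := fun v => G.minDegree_le_degree v
  -- choose δ - k - 1 neighbors of u
  obtain ⟨T', hT'sub, hT'card⟩ : ∃ T' ⊆ G.neighborFinset u, T'.card = δ - k - 1 := by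
    apply Finset.exists_subset_card_eq
    rw [G.card_neighborFinset_eq_degree]
    omega
  have huT' : u ∉ T' := fun h => G.notMem_neighborFinset_self u (hT'sub h)
  set T : Finset V := insert u T' with hTdef
  have hTcard : T.card = δ - k := by
    rw [hTdef, Finset.card_insert_of_notMem huT', hT'card]; omega
  set S : Finset V := Finset.univ \ T with hSdef
  have hmemS : ∀ v : V, v ∈ S ↔ v ∉ T := by intro v; simp [hSdef]
  have hinter : ∀ v : V, G.neighborFinset v ∩ S = G.neighborFinset v \ T := by
    intro v; ext w; simp [hSdef]
  have hsd : ∀ v : V, G.neighborFinset v \ S = G.neighborFinset v ∩ T := by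
    intro v; ext w; simp [hSdef]
  have hdom : G.IsKkkDomSet k k' 1 S := by
    constructor
    · intro v _
      rw [hinter]
      have h1 := Finset.le_card_sdiff T (G.neighborFinset v)
      have h2 : δ ≤ (G.neighborFinset v).card := by
        rw [G.card_neighborFinset_eq_degree]; exact hdeg v
      omega
    · intro v hv
      rw [hmemS, not_not] at hv
      constructor
      · rw [hinter]
        have hvsub : G.neighborFinset v ∩ T ⊆ T.erase v := by
          intro w hw
          simp only [Finset.mem_inter] at hw
          refine Finset.mem_erase.2 ⟨?_, hw.2⟩
          rintro rfl
          exact G.notMem_neighborFinset_self w hw.1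
        have h3 : (G.neighborFinset v ∩ T).card ≤ δ - k - 1 := by
          calc (G.neighborFinset v ∩ T).card ≤ (T.erase v).card := Finset.card_le_card hvsub
            _ = T.card - 1 := Finset.card_erase_of_mem hv
            _ = δ - k - 1 := by omega
        have h4 := Finset.card_sdiff_add_card_inter (G.neighborFinset v) T
        have h2 : δ ≤ (G.neighborFinset v).card := by
          rw [G.card_neighborFinset_eq_degree]; exact hdeg v
        omega
      · rw [hsd]
        rw [Finset.one_le_card]
        rw [hTdef] at hv
        rcases Finset.mem_insert.1 hv with rfl | hv'
        · -- v = u : T' is a nonempty subset of N(u) ∩ T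
          have hT'ne : T'.Nonempty := by
            rw [← Finset.card_pos, hT'card]; omega
          obtain ⟨w, hw⟩ := hT'ne
          exact ⟨w, Finset.mem_inter.2 ⟨hT'sub hw, by rw [hTdef]; exact Finset.mem_insert_of_mem hw⟩⟩
        · -- v ∈ T' : u is a neighbor of v in T
          refine ⟨u, Finset.mem_inter.2 ⟨?_, by rw [hTdef]; exact Finset.mem_insert_self _ _⟩⟩
          rw [SimpleGraph.mem_neighborFinset]
          exact G.adj_symm (G.mem_neighborFinset u v |>.1 (hT'sub hv'))
  have hScard : S.card = Fintype.card V - δ + k := by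
    rw [hSdef, Finset.card_sdiff_of_subset (Finset.subset_univ T), Finset.card_univ, hTcard]
    have : δ < Fintype.card V := by
      have := G.degree_lt_card_verts u; omega
    omega
  have hmem : S.card ∈ {n | ∃ S : Finset V, G.IsKkkDomSet k k' 1 S ∧ S.card = n} :=
    ⟨S, hdom, rfl⟩
  have hle : G.kkkDomNum k k' 1 ≤ S.card := Nat.sInf_le hmem
  rw [hScard] at hle
  exact hle
end

section
/- Let k and k' be positive integers, and let G be a finite simple graph of order n with minimum degree δ = δ(G) ≥ max{k, k'} + 2. Then γ_{(k,k',1)}(G) ≤ n − δ + max{k, k' − 1}. -/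
open Finset

/-- If k, k' ≥ 1 and δ(G) ≥ max{k,k'} + 2, then
γ_{(k,k',1)}(G) ≤ n − δ + max{k, k' − 1}. -/
theorem stmt_10 {V : Type*} [Fintype V] [DecidableEq V] (G : SimpleGraph V)
    [DecidableRel G.Adj] (k k' : ℕ) (hk : 1 ≤ k) (hk' : 1 ≤ k')
    (hδ : max k k' + 2 ≤ G.minDegree) :
    G.kkkDomNum k k' 1 ≤ Fintype.card V - G.minDegree + max k (k' - 1) := by
  rcases isEmpty_or_nonempty V with hV | hV
  · -- empty graph: the empty set is a dominating set
    have h0 : G.kkkDomNum k k' 1 ≤ 0 := by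
      apply Nat.sInf_le
      exact ⟨∅, ⟨fun v hv => absurd hv (by simp), fun v _ => (IsEmpty.false v).elim⟩, rfl⟩
    omega
  set δ := G.minDegree with hδdef
  set m := max k (k' - 1) with hm
  have hmk : k ≤ m := le_max_left _ _
  have hmk' : k' ≤ m + 1 := by omega
  have hmδ : m + 2 ≤ δ := by
    have : m ≤ max k k' := by omega
    omega
  obtain ⟨v⟩ := hV
  have hdegv : δ ≤ G.degree v := G.minDegree_le_degree v
  -- choose A ⊆ N(v) with |A| = δ - m - 1
  obtain ⟨A, hA, hAcard⟩ : ∃ A ⊆ G.neighborFinset v, A.card = δ - m - 1 := by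
    apply Finset.exists_subset_card_eq
    rw [← SimpleGraph.card_neighborFinset_eq_degree] at hdegv
    omega
  have hvA : v ∉ A := fun h => G.notMem_neighborFinset_self v (hA h)
  set B : Finset V := insert v A with hB
  have hBcard : B.card = δ - m := by
    rw [hB, Finset.card_insert_of_notMem hvA, hAcard]; omega
  set S : Finset V := univ \ B with hS
  have hScard : S.card = Fintype.card V - (δ - m) := by
    rw [hS, Finset.card_sdiff_of_subset (Finset.subset_univ B), hBcard, Finset.card_univ]
  have hmemS : ∀ u : V, u ∈ S ↔ u ∉ B := by intro u; simp [hS]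
  have hinter : ∀ u : V, G.neighborFinset u ∩ S = G.neighborFinset u \ B := by
    intro u; ext x; simp [hS, and_comm]
  have hdiff : ∀ u : V, G.neighborFinset u \ S = G.neighborFinset u ∩ B := by
    intro u; ext x; simp [hS, and_comm]
  have hcardkey : ∀ u : V,
      (G.neighborFinset u \ B).card + (G.neighborFinset u ∩ B).card = G.degree u := by
    intro u
    rw [Finset.card_sdiff_add_card_inter, SimpleGraph.card_neighborFinset_eq_degree]
  have hdom : G.IsKkkDomSet k k' 1 S := by
    constructor
    · intro u hu
      rw [hinter u]
      have h1 := hcardkey u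
      have h2 : (G.neighborFinset u ∩ B).card ≤ B.card := Finset.card_le_card
        (Finset.inter_subset_right)
      have h3 : δ ≤ G.degree u := G.minDegree_le_degree u
      omega
    · intro u hu
      have huB : u ∈ B := by rw [hmemS] at hu; tauto
      constructor
      · rw [hinter u]
        have h1 := hcardkey u
        have h2 : (G.neighborFinset u ∩ B).card ≤ B.card - 1 := by
          have hsub : G.neighborFinset u ∩ B ⊆ B.erase u := by
            intro x hx
            rw [Finset.mem_erase]
            refine ⟨fun hxu => ?_, (Finset.mem_inter.mp hx).2⟩
            exact G.notMem_neighborFinset_self u (hxu ▸ (Finset.mem_inter.mp hx).1)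
          calc (G.neighborFinset u ∩ B).card ≤ (B.erase u).card := Finset.card_le_card hsub
            _ = B.card - 1 := Finset.card_erase_of_mem huB
        have h3 : δ ≤ G.degree u := G.minDegree_le_degree u
        omega
      · rw [hdiff u]
        rcases Finset.mem_insert.mp huB with rfl | huA
        · -- u = v : A is a nonempty subset of N(v) ∩ B
          have : A ⊆ G.neighborFinset u ∩ B := fun x hx =>
            Finset.mem_inter.mpr ⟨hA hx, Finset.mem_insert_of_mem hx⟩
          have := Finset.card_le_card this
          omega
        · -- u ∈ A : v is a neighbor of u in B
          have hadj : G.Adj u v := (G.mem_neighborFinset v u).mp (hA huA) |>.symm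
          have : v ∈ G.neighborFinset u ∩ B := by
            rw [Finset.mem_inter, SimpleGraph.mem_neighborFinset]
            exact ⟨hadj, Finset.mem_insert_self v A⟩
          have := Finset.card_pos.mpr ⟨v, this⟩
          omega
  have hle : G.kkkDomNum k k' 1 ≤ S.card := Nat.sInf_le ⟨S, hdom, rfl⟩
  have hδn : δ < Fintype.card V := lt_of_le_of_lt hdegv (G.degree_lt_card_verts v)
  rw [hScard] at hle
  omega
end

section
/- Let k and k' be positive integers and let n ≥ max{k, k'} + 3. Then the complete graph K_n satisfies γ_{(k,k',1)}(K_n) = max{k, k' − 1} + 1; in particular, the upper bound γ_{(k,k',1)}(G) ≤ n − δ(G) + max{k, k' − 1} is attained by K_n. -/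
open Finset

lemma top_neighborFinset {V : Type*} [Fintype V] [DecidableEq V] (v : V) :
    (⊤ : SimpleGraph V).neighborFinset v = univ.erase v := by
  ext w
  simp [SimpleGraph.mem_neighborFinset, eq_comm, Finset.mem_erase]

/-- For k, k' ≥ 1 and n ≥ max{k,k'} + 3, the complete graph K_n satisfies
γ_{(k,k',1)}(K_n) = max{k, k'−1} + 1; in particular the bound
γ_{(k,k',1)}(G) ≤ n − δ(G) + max{k, k'−1} is attained by K_n. -/
theorem stmt_11 (k k' n : ℕ) (hk : 1 ≤ k) (hk' : 1 ≤ k') (hn : max k k' + 3 ≤ n) :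
    (⊤ : SimpleGraph (Fin n)).kkkDomNum k k' 1 = max k (k' - 1) + 1 ∧
    (⊤ : SimpleGraph (Fin n)).kkkDomNum k k' 1 =
      Fintype.card (Fin n) - (⊤ : SimpleGraph (Fin n)).minDegree + max k (k' - 1) := by
  set m := max k (k' - 1) + 1 with hm
  have hkn : max k k' ≤ n := by omega
  have hmn : m ≤ n - 2 := by omega
  have hcardu : (univ : Finset (Fin n)).card = n := by simp
  -- the witness set
  obtain ⟨S, -, hScard⟩ := Finset.exists_subset_card_eq (s := (univ : Finset (Fin n))) (n := m)
    (by omega)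
  have hmem : m ∈ {i | ∃ S : Finset (Fin n), (⊤ : SimpleGraph (Fin n)).IsKkkDomSet k k' 1 S ∧
      S.card = i} := by
    refine ⟨S, ⟨?_, ?_⟩, hScard⟩
    · intro v hv
      have : univ.erase v ∩ S = S.erase v := by
        ext w; simp [Finset.mem_erase, and_comm]
      rw [top_neighborFinset, this, Finset.card_erase_of_mem hv, hScard]
      omega
    · intro v hv
      have h1 : univ.erase v ∩ S = S := by
        ext w
        simp only [Finset.mem_inter, Finset.mem_erase, Finset.mem_univ, and_true]
        exact ⟨fun h => h.2, fun h => ⟨fun he => hv (he ▸ h), h⟩⟩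
      have hsub : S ⊆ univ.erase v := by
        intro w hw
        exact Finset.mem_erase.2 ⟨fun he => hv (he ▸ hw), Finset.mem_univ w⟩
      have h2 : (univ.erase v \ S).card = n - 1 - m := by
        rw [Finset.card_sdiff_of_subset hsub, Finset.card_erase_of_mem (Finset.mem_univ v), hcardu,
          hScard]
      rw [top_neighborFinset, h1, h2, hScard]
      omega
  have hlb : ∀ i ∈ {i | ∃ S : Finset (Fin n), (⊤ : SimpleGraph (Fin n)).IsKkkDomSet k k' 1 S ∧
      S.card = i}, m ≤ i := by
    rintro i ⟨T, ⟨hin, hout⟩, rfl⟩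
    by_cases hT : T = univ
    · subst hT; omega
    · obtain ⟨v, hv⟩ : ∃ v, v ∉ T := by
        by_contra h
        push_neg at h
        exact hT (Finset.eq_univ_of_forall h)
      have h1 : univ.erase v ∩ T = T := by
        ext w
        simp only [Finset.mem_inter, Finset.mem_erase, Finset.mem_univ, and_true]
        exact ⟨fun h => h.2, fun h => ⟨fun he => hv (he ▸ h), h⟩⟩
      have hk'T : k' ≤ T.card := by
        have := (hout v hv).1
        rwa [top_neighborFinset, h1] at this
      -- T nonempty since k' ≥ 1
      obtain ⟨w, hw⟩ : T.Nonempty := Finset.card_pos.1 (by omega)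
      have : (univ.erase w ∩ T) = T.erase w := by
        ext x; simp [Finset.mem_erase, and_comm]
      have hkT := hin w hw
      rw [top_neighborFinset, this, Finset.card_erase_of_mem hw] at hkT
      omega
  have hInf : (⊤ : SimpleGraph (Fin n)).kkkDomNum k k' 1 = m :=
    le_antisymm (Nat.sInf_le hmem) (le_csInf ⟨m, hmem⟩ hlb)
  have hnpos : 0 < n := by omega
  have : Nonempty (Fin n) := ⟨⟨0, hnpos⟩⟩
  have hmin : (⊤ : SimpleGraph (Fin n)).minDegree = n - 1 := by
    obtain ⟨v, hv⟩ := (⊤ : SimpleGraph (Fin n)).exists_minimal_degree_vertex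
    rw [hv, SimpleGraph.complete_graph_degree, Fintype.card_fin]
  refine ⟨hInf, ?_⟩
  rw [hInf, hmin, Fintype.card_fin]
  omega
end

section
/- If G is a finite simple graph of order n with minimum degree δ = δ(G) ≥ 3, then the restrained double domination number satisfies γ_{2r}(G) ≤ n − δ + 1. -/
open Finset

/-- If δ(G) ≥ 3, then γ_{2r}(G) = γ_{(1,2,1)}(G) ≤ n − δ + 1. -/
theorem stmt_12 {V : Type*} [Fintype V] [DecidableEq V] (G : SimpleGraph V)
    [DecidableRel G.Adj] (hδ : 3 ≤ G.minDegree) :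
    G.kkkDomNum 1 2 1 ≤ Fintype.card V - G.minDegree + 1 := by
  have hV : Nonempty V := by
    by_contra h
    rw [not_nonempty_iff] at h
    have : (univ : Finset V) = ∅ := univ_eq_empty
    simp [SimpleGraph.minDegree, this] at hδ
  obtain ⟨x⟩ := hV
  have hx : G.minDegree ≤ (G.neighborFinset x).card := G.minDegree_le_degree x
  have hn : G.minDegree < Fintype.card V :=
    lt_of_le_of_lt (G.minDegree_le_degree x) (G.degree_lt_card_verts x)
  obtain ⟨T, hTsub, hTcard⟩ := Finset.exists_subset_card_eq
    (show G.minDegree - 2 ≤ (G.neighborFinset x).card from le_trans (Nat.sub_le _ _) hx)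
  have hxT : x ∉ T := fun h => (G.notMem_neighborFinset_self x) (hTsub h)
  set D : Finset V := insert x T with hD
  have hDcard : D.card = G.minDegree - 1 := by
    rw [hD, Finset.card_insert_of_notMem hxT, hTcard]; omega
  have hdeg : ∀ v : V, G.minDegree ≤ (G.neighborFinset v).card :=
    fun v => G.minDegree_le_degree v
  have hkey : ∀ v : V, (G.neighborFinset v ∩ (univ \ D)) = G.neighborFinset v \ D := by
    intro v; ext w; simp
  have hkey2 : ∀ v : V, (G.neighborFinset v \ (univ \ D)) = G.neighborFinset v ∩ D := by
    intro v; ext w; simp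
  refine Nat.sInf_le ⟨univ \ D, ⟨?_, ?_⟩, ?_⟩
  · intro v hv
    rw [hkey]
    have h1 := Finset.le_card_sdiff D (G.neighborFinset v)
    have := hdeg v
    omega
  · intro v hv
    have hvD : v ∈ D := by simpa using hv
    constructor
    · rw [hkey]
      have hsub : G.neighborFinset v ∩ D ⊆ D.erase v := by
        intro w hw
        simp only [Finset.mem_inter] at hw
        refine Finset.mem_erase.2 ⟨?_, hw.2⟩
        rintro rfl
        exact (G.notMem_neighborFinset_self w) hw.1
      have h2 : (G.neighborFinset v ∩ D).card ≤ D.card - 1 := by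
        have := Finset.card_le_card hsub
        rwa [Finset.card_erase_of_mem hvD] at this
      have h3 : (G.neighborFinset v \ D).card + (G.neighborFinset v ∩ D).card
          = (G.neighborFinset v).card := by
        rw [Finset.card_sdiff_add_card_inter]
      have := hdeg v
      omega
    · rw [hkey2]
      rw [Finset.one_le_card]
      have hTne : T.Nonempty := by
        rw [← Finset.card_pos, hTcard]; omega
      rcases Finset.mem_insert.1 hvD with rfl | hvT
      · obtain ⟨t, ht⟩ := hTne
        exact ⟨t, Finset.mem_inter.2 ⟨hTsub ht, Finset.mem_insert_of_mem ht⟩⟩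
      · refine ⟨x, Finset.mem_inter.2 ⟨?_, Finset.mem_insert_self x T⟩⟩
        rw [SimpleGraph.mem_neighborFinset]
        exact ((SimpleGraph.mem_neighborFinset G x v).1 (hTsub hvT)).symm
  · rw [Finset.card_sdiff_of_subset (Finset.subset_univ D), Finset.card_univ, hDcard]
    omega
end

section
/- If G is a finite simple graph of order n and size m without isolated vertices, then the restrained domination number satisfies γ_r(G) ≥ n − 2m/3. -/
open Finset

lemma swap_count {V : Type*} [Fintype V] [DecidableEq V] (G : SimpleGraph V)
    [DecidableRel G.Adj] (S A : Finset V) :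
    ∑ v ∈ S, (G.neighborFinset v ∩ A).card = ∑ v ∈ A, (G.neighborFinset v ∩ S).card := by
  have key : ∀ (v : V) (B : Finset V),
      (G.neighborFinset v ∩ B).card = ∑ u ∈ B, if G.Adj v u then 1 else 0 := by
    intro v B
    rw [Finset.inter_comm, ← Finset.filter_mem_eq_inter, Finset.card_filter]
    simp [SimpleGraph.mem_neighborFinset]
  simp_rw [key]
  rw [Finset.sum_comm]
  refine Finset.sum_congr rfl fun u _ => Finset.sum_congr rfl fun v _ => ?_
  simp [G.adj_comm]

/-- If G has no isolated vertices, then γ_r(G) = γ_{(0,1,1)}(G) ≥ n − 2m/3. -/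
theorem stmt_14 {V : Type*} [Fintype V] [DecidableEq V] (G : SimpleGraph V)
    [DecidableRel G.Adj] (h : ∀ v : V, 0 < G.degree v) :
    (Fintype.card V : ℝ) - 2 * G.edgeFinset.card / 3 ≤ G.kkkDomNum 0 1 1 := by

  have hne : {n | ∃ S : Finset V, G.IsKkkDomSet 0 1 1 S ∧ S.card = n}.Nonempty :=
    ⟨(univ : Finset V).card, univ, ⟨fun v _ => Nat.zero_le _,
      fun v hv => absurd (mem_univ v) hv⟩, rfl⟩
  obtain ⟨S, hS, hcard⟩ := Nat.sInf_mem hne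
  set A : Finset V := univ \ S with hA
  have hmemA : ∀ v ∈ A, v ∉ S := fun v hv => (Finset.mem_sdiff.mp hv).2
  have hdegA : ∀ v ∈ A, 2 ≤ G.degree v := by
    intro v hv
    obtain ⟨h1, h2⟩ := hS.2 v (hmemA v hv)
    have : G.degree v = (G.neighborFinset v ∩ S).card + (G.neighborFinset v \ S).card := by
      rw [SimpleGraph.degree, ← Finset.card_inter_add_card_sdiff]
    omega
  have hcross : A.card ≤ ∑ v ∈ A, (G.neighborFinset v ∩ S).card := by
    calc A.card = ∑ v ∈ A, 1 := by simp
    _ ≤ _ := Finset.sum_le_sum fun v hv => (hS.2 v (hmemA v hv)).1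
  have hSdeg : ∑ v ∈ A, (G.neighborFinset v ∩ S).card ≤ ∑ v ∈ S, G.degree v := by
    rw [← swap_count]
    refine Finset.sum_le_sum fun v _ => ?_
    exact Finset.card_le_card (Finset.inter_subset_left)
  have hsum : ∑ v ∈ A, G.degree v + ∑ v ∈ S, G.degree v = 2 * G.edgeFinset.card := by
    rw [Finset.sum_sdiff (Finset.subset_univ S)]
    exact G.sum_degrees_eq_twice_card_edges
  have hAdeg : 2 * A.card ≤ ∑ v ∈ A, G.degree v := by
    calc 2 * A.card = ∑ v ∈ A, 2 := by simp [mul_comm]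
    _ ≤ _ := Finset.sum_le_sum hdegA
  have hmain : 3 * A.card ≤ 2 * G.edgeFinset.card := by omega
  have hcardV : A.card + S.card = Fintype.card V := by
    rw [hA, Finset.card_sdiff_add_card_eq_card (Finset.subset_univ S), Finset.card_univ]
  have hS' : S.card = G.kkkDomNum 0 1 1 := hcard
  rw [← hS']
  have h1 : (3 : ℝ) * A.card ≤ 2 * G.edgeFinset.card := by exact_mod_cast hmain
  have h2 : (A.card : ℝ) + S.card = Fintype.card V := by exact_mod_cast hcardV
  linarith
end

section
/- If T is a tree of order n ≥ 1, then the restrained domination number satisfies γ_r(T) ≥ ⌈(n + 2)/3⌉. -/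
open Finset

lemma key_bound {V : Type*} [Fintype V] [DecidableEq V] (T : SimpleGraph V)
    [DecidableRel T.Adj] (htree : T.IsTree) (S : Finset V)
    (hS : T.IsKkkDomSet 0 1 1 S) : Fintype.card V + 2 ≤ 3 * S.card := by
  classical
  set A : Finset V := Sᶜ with hA
  -- choice functions
  have hchoose : ∀ v ∈ A, ∃ s ∈ T.neighborFinset v ∩ S, ∃ a ∈ T.neighborFinset v \ S, True := by
    intro v hv
    have hv' : v ∉ S := by simpa [hA] using hv
    obtain ⟨h1, h2⟩ := hS.2 v hv'
    obtain ⟨s, hs⟩ := Finset.card_pos.mp (lt_of_lt_of_le one_pos h1)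
    obtain ⟨a, ha⟩ := Finset.card_pos.mp (lt_of_lt_of_le one_pos h2)
    exact ⟨s, hs, a, ha, trivial⟩
  choose! s hs a ha _h using hchoose
  set f : V → Sym2 V := fun v => s(v, s v) with hf
  set g : V → Sym2 V := fun v => s(v, a v) with hg
  -- f maps into edgeFinset, images are disjoint
  have hfS : ∀ v ∈ A, s v ∈ S := fun v hv => (Finset.mem_inter.mp (hs v hv)).2
  have hfadj : ∀ v ∈ A, T.Adj v (s v) := fun v hv =>
    (SimpleGraph.mem_neighborFinset _ _ _).mp (Finset.mem_inter.mp (hs v hv)).1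
  have hgA : ∀ v ∈ A, a v ∈ A := fun v hv => by
    have := (Finset.mem_sdiff.mp (ha v hv)).2
    simpa [hA] using this
  have hgadj : ∀ v ∈ A, T.Adj v (a v) := fun v hv =>
    (SimpleGraph.mem_neighborFinset _ _ _).mp (Finset.mem_sdiff.mp (ha v hv)).1
  have hAS : ∀ v ∈ A, v ∉ S := fun v hv => by simpa [hA] using hv
  -- images are in edgeFinset
  have hfim : ∀ v ∈ A, f v ∈ T.edgeFinset := fun v hv => by
    simp [hf, SimpleGraph.mem_edgeFinset, (hfadj v hv)]
  have hgim : ∀ v ∈ A, g v ∈ T.edgeFinset := fun v hv => by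
    simp [hg, SimpleGraph.mem_edgeFinset, (hgadj v hv)]
  -- f is injective on A
  have hfinj : Set.InjOn f A := by
    intro v hv w hw hvw
    have hv' : v ∈ A := hv
    have hw' : w ∈ A := hw
    rw [hf] at hvw
    simp only [Sym2.eq, Sym2.rel_iff', Prod.mk.injEq, Prod.swap_prod_mk] at hvw
    rcases hvw with ⟨h1, _⟩ | ⟨h1, h2⟩
    · exact h1
    · exact absurd (h1 ▸ hfS w hw') (hAS v hv')
  have hcross : A.card ≤ (A.image f).card := le_of_eq (Finset.card_image_of_injOn hfinj).symm
  -- fibers of g have size ≤ 2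
  have hinner : A.card ≤ 2 * (A.image g).card := by
    apply Finset.card_le_mul_card_image
    intro b hb
    induction b using Sym2.ind with
    | _ x y =>
      have : {v ∈ A | g v = s(x, y)} ⊆ {x, y} := by
        intro v hv
        obtain ⟨hvA, hgv⟩ := Finset.mem_filter.mp hv
        have hmem : v ∈ s(x, y) := hgv ▸ Sym2.mem_mk_left v (a v)
        rcases Sym2.mem_iff.mp hmem with h | h <;> simp [h]
      calc {v ∈ A | g v = s(x, y)}.card ≤ ({x, y} : Finset V).card := Finset.card_le_card this
        _ ≤ 2 := Finset.card_insert_le _ _ |>.trans (by simp)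
  -- images are disjoint
  have hdisj : Disjoint (A.image f) (A.image g) := by
    rw [Finset.disjoint_left]
    intro e hef heg
    obtain ⟨v, hv, rfl⟩ := Finset.mem_image.mp hef
    obtain ⟨w, hw, hwe⟩ := Finset.mem_image.mp heg
    rw [hg, hf] at hwe
    simp only [Sym2.eq, Sym2.rel_iff', Prod.mk.injEq, Prod.swap_prod_mk] at hwe
    rcases hwe with ⟨h1, h2⟩ | ⟨h1, h2⟩
    · exact hAS (s v) (h2 ▸ hgA w hw) (hfS v hv)
    · have hkey : s v = w := by
        first | exact h2 | exact h2.symm | exact h1 | exact h1.symm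
      exact hAS w hw (hkey ▸ hfS v hv)
  -- total edge count
  have hsub : A.image f ∪ A.image g ⊆ T.edgeFinset := by
    apply Finset.union_subset <;> intro e he <;>
      obtain ⟨v, hv, rfl⟩ := Finset.mem_image.mp he
    · exact hfim v hv
    · exact hgim v hv
  have hcard : (A.image f).card + (A.image g).card ≤ T.edgeFinset.card := by
    rw [← Finset.card_union_of_disjoint hdisj]
    exact Finset.card_le_card hsub
  have hedge : T.edgeFinset.card + 1 = Fintype.card V := htree.card_edgeFinset
  have hAcard : A.card = Fintype.card V - S.card := by
    simp [hA, Finset.card_compl]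
  have hSle : S.card ≤ Fintype.card V := Finset.card_le_card (Finset.subset_univ S)
  -- 3 * A.card ≤ 2 * edges ≤ 2 * (n - 1)
  have h3 : 3 * A.card ≤ 2 * T.edgeFinset.card := by
    calc 3 * A.card = 2 * A.card + A.card := by ring
      _ ≤ 2 * (A.image f).card + 2 * (A.image g).card :=
          Nat.add_le_add (Nat.mul_le_mul_left 2 hcross) hinner
      _ = 2 * ((A.image f).card + (A.image g).card) := by ring
      _ ≤ 2 * T.edgeFinset.card := Nat.mul_le_mul_left 2 hcard
  omega

/-- If T is a tree of order n ≥ 1, then γ_r(T) = γ_{(0,1,1)}(T) ≥ ⌈(n+2)/3⌉. -/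
theorem stmt_16 {V : Type*} [Fintype V] [DecidableEq V] (T : SimpleGraph V)
    [DecidableRel T.Adj] (htree : T.IsTree) (hn : 1 ≤ Fintype.card V) :
    (⌈((Fintype.card V : ℚ) + 2) / 3⌉ : ℤ) ≤ (T.kkkDomNum 0 1 1 : ℤ) := by
  classical
  have hne : {n | ∃ S : Finset V, T.IsKkkDomSet 0 1 1 S ∧ S.card = n}.Nonempty := by
    refine ⟨(Finset.univ : Finset V).card, Finset.univ, ⟨?_, ?_⟩, rfl⟩
    · intro v _; exact Nat.zero_le _
    · intro v hv; exact absurd (Finset.mem_univ v) hv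
  obtain ⟨S, hS, hScard⟩ := Nat.sInf_mem hne
  have hkey := key_bound T htree S hS
  rw [SimpleGraph.kkkDomNum]
  rw [Int.ceil_le, div_le_iff₀ (by norm_num)]
  rw [hScard] at hkey
  have hkey' : Fintype.card V + 2 ≤ sInf {n | ∃ S : Finset V, T.IsKkkDomSet 0 1 1 S ∧ S.card = n} * 3 := by omega
  exact_mod_cast hkey'
end

section
/- Let k be a positive integer. If G is a finite simple graph of order n and size m with minimum degree δ(G) ≥ k, then the k-tuple total restrained domination number satisfies γ_{×k,t}^r(G) ≥ 3n/2 − m/k. -/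
open Finset

private lemma sym_sum_aux {V : Type*} [Fintype V] [DecidableEq V] (G : SimpleGraph V)
    [DecidableRel G.Adj] (A B : Finset V) :
    ∑ v ∈ A, (G.neighborFinset v ∩ B).card = ∑ v ∈ B, (G.neighborFinset v ∩ A).card := by
  have h : ∀ (C D : Finset V), ∑ v ∈ C, (G.neighborFinset v ∩ D).card
      = ∑ v ∈ C, ∑ w ∈ D, if G.Adj v w then 1 else 0 := by
    intro C D
    refine Finset.sum_congr rfl fun v _ => ?_
    rw [← Finset.card_filter]
    congr 1
    ext w
    simp [SimpleGraph.mem_neighborFinset, and_comm]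
  rw [h, h, Finset.sum_comm]
  refine Finset.sum_congr rfl fun v _ => Finset.sum_congr rfl fun w _ => ?_
  simp [G.adj_comm]

/-- If k ≥ 1 and δ(G) ≥ k, then γ_{×k,t}^r(G) = γ_{(k,k,k)}(G) ≥ 3n/2 − m/k. -/
theorem stmt_17 {V : Type*} [Fintype V] [DecidableEq V] (G : SimpleGraph V)
    [DecidableRel G.Adj] (k : ℕ) (hk : 1 ≤ k)
    (hδ : ∀ v : V, k ≤ G.degree v) :
    3 * (Fintype.card V : ℝ) / 2 - (G.edgeFinset.card : ℝ) / k ≤ G.kkkDomNum k k k := by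
  have hne : G.kkkDomNum k k k ∈ {n | ∃ S : Finset V, G.IsKkkDomSet k k k S ∧ S.card = n} := by
    apply Nat.sInf_mem
    refine ⟨(Finset.univ : Finset V).card, Finset.univ,
      ⟨fun v _ => ?_, fun v hv => absurd (Finset.mem_univ v) hv⟩, rfl⟩
    simpa [Finset.inter_univ] using hδ v
  obtain ⟨S, hS, hcard⟩ := hne
  have hdeg : ∀ v : V, G.degree v
      = (G.neighborFinset v ∩ S).card + (G.neighborFinset v \ S).card := by
    intro v
    rw [Finset.card_inter_add_card_sdiff]
    rfl
  have h1 : k * S.card ≤ ∑ v ∈ S, (G.neighborFinset v ∩ S).card := by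
    calc k * S.card = ∑ _v ∈ S, k := by simp [mul_comm]
    _ ≤ _ := Finset.sum_le_sum hS.1
  have h2 : k * Sᶜ.card ≤ ∑ v ∈ Sᶜ, (G.neighborFinset v ∩ S).card := by
    calc k * Sᶜ.card = ∑ _v ∈ Sᶜ, k := by simp [mul_comm]
    _ ≤ _ := Finset.sum_le_sum fun v hv => (hS.2 v (Finset.mem_compl.mp hv)).1
  have h3 : k * Sᶜ.card ≤ ∑ v ∈ Sᶜ, (G.neighborFinset v \ S).card := by
    calc k * Sᶜ.card = ∑ _v ∈ Sᶜ, k := by simp [mul_comm]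
    _ ≤ _ := Finset.sum_le_sum fun v hv => (hS.2 v (Finset.mem_compl.mp hv)).2
  have hsd : ∀ v : V, G.neighborFinset v \ S = G.neighborFinset v ∩ Sᶜ := by
    intro v; ext w; simp
  have hsym : ∑ v ∈ S, (G.neighborFinset v \ S).card
      = ∑ v ∈ Sᶜ, (G.neighborFinset v ∩ S).card := by
    have := sym_sum_aux G S Sᶜ
    simpa [hsd] using this
  have hsum : ∑ v ∈ S, G.degree v + ∑ v ∈ Sᶜ, G.degree v = 2 * G.edgeFinset.card := by
    rw [Finset.sum_add_sum_compl, G.sum_degrees_eq_twice_card_edges]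
  have hbig : k * S.card + 3 * (k * Sᶜ.card) ≤ 2 * G.edgeFinset.card := by
    rw [← hsum]
    have e1 : ∑ v ∈ S, G.degree v
        = ∑ v ∈ S, (G.neighborFinset v ∩ S).card + ∑ v ∈ S, (G.neighborFinset v \ S).card := by
      rw [← Finset.sum_add_distrib]; exact Finset.sum_congr rfl fun v _ => hdeg v
    have e2 : ∑ v ∈ Sᶜ, G.degree v
        = ∑ v ∈ Sᶜ, (G.neighborFinset v ∩ S).card
          + ∑ v ∈ Sᶜ, (G.neighborFinset v \ S).card := by
      rw [← Finset.sum_add_distrib]; exact Finset.sum_congr rfl fun v _ => hdeg v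
    rw [e1, e2, hsym]
    omega
  have hcardc : S.card + Sᶜ.card = Fintype.card V := by
    rw [Finset.card_compl]
    have := Finset.card_le_univ S
    omega
  have hnat : 3 * (k * Fintype.card V) ≤ 2 * (k * S.card) + 2 * G.edgeFinset.card := by
    have : k * Fintype.card V = k * S.card + k * Sᶜ.card := by rw [← Nat.mul_add, hcardc]
    omega
  have hk0 : (k:ℝ) ≠ 0 := by positivity
  rw [div_sub_div _ _ two_ne_zero hk0, div_le_iff₀ (by positivity), ← hcard]
  have hr : (3:ℝ) * (k * Fintype.card V) ≤ 2 * (k * S.card) + 2 * G.edgeFinset.card := by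
    exact_mod_cast hnat
  nlinarith [hr]
end

section
/- Let k be a positive integer. If G is a finite simple graph of order n and size m with minimum degree δ(G) ≥ k − 1, then the k-tuple domination number satisfies γ_{×k}(G) ≥ (2kn − 2m)/(k + 1). -/
open Finset

theorem keyineq {V : Type*} [Fintype V] [DecidableEq V] (G : SimpleGraph V)
    [DecidableRel G.Adj] (k : ℕ) (hk : 1 ≤ k) (S : Finset V)
    (hS : (∀ v ∈ S, k - 1 ≤ (G.neighborFinset v ∩ S).card) ∧
      (∀ v ∉ S, k ≤ (G.neighborFinset v ∩ S).card ∧ 0 ≤ (G.neighborFinset v \ S).card)) :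
    2 * k * Fintype.card V ≤ 2 * G.edgeFinset.card + (k + 1) * S.card := by
  have hsum : ∑ v ∈ S, G.degree v + ∑ v ∈ Sᶜ, G.degree v = 2 * G.edgeFinset.card := by
    rw [Finset.sum_add_sum_compl, SimpleGraph.sum_degrees_eq_twice_card_edges]
  have hdeg : ∀ v, G.degree v = (G.neighborFinset v ∩ S).card + (G.neighborFinset v \ S).card := by
    intro v
    rw [Finset.card_inter_add_card_sdiff, SimpleGraph.card_neighborFinset_eq_degree]
  have hA : (k - 1) * S.card ≤ ∑ v ∈ S, (G.neighborFinset v ∩ S).card := by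
    calc (k - 1) * S.card = ∑ _v ∈ S, (k - 1) := by rw [Finset.sum_const, smul_eq_mul, mul_comm]
    _ ≤ _ := Finset.sum_le_sum (fun v hv => hS.1 v hv)
  have hB : k * Sᶜ.card ≤ ∑ v ∈ Sᶜ, (G.neighborFinset v ∩ S).card := by
    calc k * Sᶜ.card = ∑ _v ∈ Sᶜ, k := by rw [Finset.sum_const, smul_eq_mul, mul_comm]
    _ ≤ _ := Finset.sum_le_sum (fun v hv => (hS.2 v (by simpa using hv)).1)
  have hCB : ∑ v ∈ S, (G.neighborFinset v \ S).card
      = ∑ v ∈ Sᶜ, (G.neighborFinset v ∩ S).card := by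
    have e1 : ∀ v : V, G.neighborFinset v \ S = Sᶜ.filter (fun u => G.Adj v u) := by
      intro v; ext u; simp [and_comm]
    have e2 : ∀ v : V, G.neighborFinset v ∩ S = S.filter (fun u => G.Adj v u) := by
      intro v; ext u; simp [and_comm]
    simp only [e1, e2, Finset.card_filter]
    rw [Finset.sum_comm]
    refine Finset.sum_congr rfl fun u hu => Finset.sum_congr rfl fun v hv => ?_
    simp [G.adj_comm]
  have hC : k * Sᶜ.card ≤ ∑ v ∈ S, (G.neighborFinset v \ S).card := hCB ▸ hB
  have h2m : (k - 1) * S.card + 2 * (k * Sᶜ.card) ≤ 2 * G.edgeFinset.card := by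
    calc (k - 1) * S.card + 2 * (k * Sᶜ.card)
        ≤ ∑ v ∈ S, (G.neighborFinset v ∩ S).card + (∑ v ∈ S, (G.neighborFinset v \ S).card
          + ∑ v ∈ Sᶜ, (G.neighborFinset v ∩ S).card) := by
          have := add_le_add hC hB
          omega
      _ ≤ ∑ v ∈ S, G.degree v + ∑ v ∈ Sᶜ, G.degree v := by
          simp only [hdeg, Finset.sum_add_distrib]
          have : (0:ℕ) ≤ ∑ v ∈ Sᶜ, (G.neighborFinset v \ S).card := Nat.zero_le _
          omega
      _ = 2 * G.edgeFinset.card := hsum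
  have hcard : S.card + Sᶜ.card = Fintype.card V := Finset.card_add_card_compl S
  obtain ⟨k', rfl⟩ : ∃ k', k = k' + 1 := ⟨k - 1, by omega⟩
  simp only [Nat.add_sub_cancel] at h2m ⊢
  nlinarith [h2m, hcard]

/-- If k ≥ 1 and δ(G) ≥ k − 1, then γ_{×k}(G) = γ_{(k-1,k,0)}(G) ≥ (2kn − 2m)/(k + 1). -/
theorem stmt_19 {V : Type*} [Fintype V] [DecidableEq V] (G : SimpleGraph V)
    [DecidableRel G.Adj] (k : ℕ) (hk : 1 ≤ k)
    (hδ : ∀ v : V, k - 1 ≤ G.degree v) :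
    (2 * (k : ℝ) * Fintype.card V - 2 * G.edgeFinset.card) / ((k : ℝ) + 1)
      ≤ G.kkkDomNum (k - 1) k 0 := by
  have hVdom : G.IsKkkDomSet (k-1) k 0 (Finset.univ : Finset V) := by
    constructor
    · intro v _
      simpa [SimpleGraph.card_neighborFinset_eq_degree] using hδ v
    · intro v hv; simp at hv
  have hne : {n | ∃ S : Finset V, G.IsKkkDomSet (k-1) k 0 S ∧ S.card = n}.Nonempty :=
    ⟨_, Finset.univ, hVdom, rfl⟩
  obtain ⟨S, hS, hScard⟩ := Nat.sInf_mem hne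
  have key := keyineq G k hk S hS
  rw [div_le_iff₀ (by positivity)]
  rw [SimpleGraph.kkkDomNum, ← hScard]
  have := (Nat.cast_le (α := ℝ)).2 key
  push_cast at this
  linarith
end
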